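/- A subset A of a Euclidean space is nearly convex if and only if A is nearly equal to its convex hull (A ≈ conv A). -/

import Mathlib

open Set Topology Filter

variable {X : Type*} [NormedAddCommGroup X] [InnerProductSpace ℝ X] [FiniteDimensional ℝ X]

def NearlyEqual (A B : Set X) : Prop :=
  closure A = closure B ∧ intrinsicInterior ℝ A = intrinsicInterior ℝ B

def NearlyConvex (A : Set X) : Prop :=
  ∃ C : Set X, Convex ℝ C ∧ C ⊆ A ∧ A ⊆ closure C


theorem my_convex_interior_closure {V : Type*} [NormedAddCommGroup V] [NormedSpace ℝ V]
    [FiniteDimensional ℝ V] {s : Set V} (hs : Convex ℝ s) :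
    interior (closure s) = interior s := by
  refine subset_antisymm (fun x hx => ?_) (interior_mono subset_closure)
  have hspan : affineSpan ℝ s = ⊤ := by
    have h1 : affineSpan ℝ (closure s) = ⊤ :=
      affineSpan_eq_top_of_nonempty_interior
        (by rw [hs.closure.convexHull_eq]; exact ⟨x, hx⟩)
    have h2 : affineSpan ℝ (closure s) ≤ affineSpan ℝ s := by
      rw [affineSpan_le]
      exact closure_minimal (subset_affineSpan ℝ s)
        (affineSpan ℝ s).closed_of_finiteDimensional
    exact top_le_iff.1 (h1 ▸ h2)
  obtain ⟨y, hy⟩ := hs.interior_nonempty_iff_affineSpan_eq_top.2 hspan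
  -- find ε > 0 with x + ε • (x - y) ∈ closure s
  have hcont : Continuous fun t : ℝ => t • (x - y) + x := by continuity
  have hev : ∀ᶠ t in 𝓝 (0 : ℝ), t • (x - y) + x ∈ interior (closure s) :=
    hcont.continuousAt.eventually_mem (isOpen_interior.mem_nhds (show (0:ℝ) • (x - y) + x ∈ interior (closure s) by simpa using hx))
  obtain ⟨ε, hz, hε⟩ :=
    ((hev.filter_mono nhdsWithin_le_nhds).and
      (self_mem_nhdsWithin (s := Ioi (0:ℝ)) (a := (0:ℝ)))).exists
  have hε' : (0:ℝ) < 1 + ε := by linarith [hε]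
  have hx' : (ε / (1 + ε)) • y + (1 / (1 + ε)) • (ε • (x - y) + x) = x := by
    match_scalars <;> (field_simp; try ring)
  rw [← hx']
  exact hs.combo_interior_closure_mem_interior hy (interior_subset hz)
    (by positivity) (by positivity)
    (by field_simp; ring)

theorem my_intrinsicInterior_eq_interior {V : Type*} [NormedAddCommGroup V]
    [NormedSpace ℝ V] {s : Set V} (h : affineSpan ℝ s = ⊤) :
    intrinsicInterior ℝ s = interior s := by
  refine subset_antisymm ?_ interior_subset_intrinsicInterior
  intro x hx
  rw [mem_intrinsicInterior] at hx
  obtain ⟨y, hy, rfl⟩ := hx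
  obtain ⟨O, hO, hOeq⟩ :=
    isOpen_induced_iff.1 (isOpen_interior (s := ((↑) ⁻¹' s : Set (affineSpan ℝ s))))
  have hmem : (y : V) ∈ O := by rw [← hOeq] at hy; exact hy
  have hsub : O ⊆ s := by
    intro v hv
    have hv' : v ∈ affineSpan ℝ s := h ▸ AffineSubspace.mem_top ℝ V v
    have h2 : (⟨v, hv'⟩ : affineSpan ℝ s) ∈ (Subtype.val) ⁻¹' O := hv
    rw [hOeq] at h2
    have h3 : (⟨v, hv'⟩ : affineSpan ℝ s) ∈ (Subtype.val) ⁻¹' s := interior_subset h2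
    exact h3
  exact interior_maximal hsub hO hmem

theorem my_sandwich {C A : Set X} (hC : Convex ℝ C) (hCA : C ⊆ A) (hAc : A ⊆ closure C) :
    intrinsicInterior ℝ A = intrinsicInterior ℝ C := by
  rcases C.eq_empty_or_nonempty with rfl | ⟨p, hp⟩
  · have hA : A = ∅ := by simpa [subset_empty_iff] using hAc
    rw [hA]
  · haveI : Nonempty (affineSpan ℝ C) := ⟨⟨p, subset_affineSpan ℝ C hp⟩⟩
    haveI : Nonempty C := ⟨⟨p, hp⟩⟩
    set p' : affineSpan ℝ C := ⟨p, subset_affineSpan ℝ C hp⟩ with hp'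
    set e := (AffineIsometryEquiv.constVSub ℝ p').symm with he
    set ψ := (affineSpan ℝ C).subtypeₐᵢ.comp e.toAffineIsometry with hψdef
    have hrange : Set.range ⇑ψ = (affineSpan ℝ C : Set X) := by
      have h1 : Set.range ⇑ψ = Subtype.val '' Set.range ⇑e := by
        rw [← Set.range_comp]; rfl
      rw [h1, e.surjective.range_eq, Set.image_univ, Subtype.range_coe]
    have hCr : C ⊆ Set.range ⇑ψ := hrange ▸ subset_affineSpan ℝ C
    have hclr : closure C ⊆ Set.range ⇑ψ := by
      rw [hrange]
      exact closure_minimal (subset_affineSpan ℝ C)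
        (affineSpan ℝ C).closed_of_finiteDimensional
    have hAr : A ⊆ Set.range ⇑ψ := hAc.trans hclr
    have key : ∀ s : Set X, s ⊆ Set.range ⇑ψ → affineSpan ℝ (⇑ψ ⁻¹' s) = ⊤ →
        intrinsicInterior ℝ s = ⇑ψ '' interior (⇑ψ ⁻¹' s) := by
      intro s hs1 hs2
      conv_lhs => rw [← Set.image_preimage_eq_of_subset hs1]
      rw [AffineIsometry.image_intrinsicInterior, my_intrinsicInterior_eq_interior hs2]
    have hspanC : affineSpan ℝ (⇑ψ ⁻¹' C) = ⊤ := by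
      have h1 : ⇑ψ ⁻¹' C = ⇑e ⁻¹' (Subtype.val ⁻¹' C) := rfl
      rw [h1, ← AffineIsometryEquiv.coe_toAffineEquiv, ← AffineSubspace.comap_span,
        affineSpan_coe_preimage_eq_top, AffineSubspace.comap_top]
    have hspanA : affineSpan ℝ (⇑ψ ⁻¹' A) = ⊤ :=
      eq_top_iff.2 (hspanC ▸ affineSpan_mono ℝ (preimage_mono hCA))
    have hconvC1 : Convex ℝ (⇑ψ ⁻¹' C) := hC.affine_preimage ψ.toAffineMap
    have hemb : Topology.IsEmbedding ⇑ψ := ψ.isometry.isEmbedding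
    have hclose : closure (⇑ψ ⁻¹' C) = ⇑ψ ⁻¹' closure C := by
      rw [hemb.toIsInducing.closure_eq_preimage_closure_image,
        Set.image_preimage_eq_of_subset hCr]
    have hint : interior (⇑ψ ⁻¹' A) = interior (⇑ψ ⁻¹' C) := by
      refine subset_antisymm ?_ (interior_mono (preimage_mono hCA))
      calc interior (⇑ψ ⁻¹' A) ⊆ interior (⇑ψ ⁻¹' closure C) :=
            interior_mono (preimage_mono hAc)
        _ = interior (closure (⇑ψ ⁻¹' C)) := by rw [hclose]
        _ = interior (⇑ψ ⁻¹' C) := my_convex_interior_closure hconvC1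
    rw [key A hAr hspanA, key C hCr hspanC, hint]

theorem my_relint {s : Set X} (hs : Convex ℝ s) (hne : s.Nonempty) :
    Convex ℝ (intrinsicInterior ℝ s) ∧ closure (intrinsicInterior ℝ s) = closure s := by
  obtain ⟨p, hp⟩ := hne
  haveI : Nonempty (affineSpan ℝ s) := ⟨⟨p, subset_affineSpan ℝ s hp⟩⟩
  haveI : Nonempty s := ⟨⟨p, hp⟩⟩
  set p' : affineSpan ℝ s := ⟨p, subset_affineSpan ℝ s hp⟩ with hp'
  set e := (AffineIsometryEquiv.constVSub ℝ p').symm with he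
  set ψ := (affineSpan ℝ s).subtypeₐᵢ.comp e.toAffineIsometry with hψdef
  have hrange : Set.range ⇑ψ = (affineSpan ℝ s : Set X) := by
    have h1 : Set.range ⇑ψ = Subtype.val '' Set.range ⇑e := by
      rw [← Set.range_comp]; rfl
    rw [h1, e.surjective.range_eq, Set.image_univ, Subtype.range_coe]
  have hCr : s ⊆ Set.range ⇑ψ := hrange ▸ subset_affineSpan ℝ s
  have hspanC : affineSpan ℝ (⇑ψ ⁻¹' s) = ⊤ := by
    have h1 : ⇑ψ ⁻¹' s = ⇑e ⁻¹' (Subtype.val ⁻¹' s) := rfl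
    rw [h1, ← AffineIsometryEquiv.coe_toAffineEquiv, ← AffineSubspace.comap_span,
      affineSpan_coe_preimage_eq_top, AffineSubspace.comap_top]
  have hconv1 : Convex ℝ (⇑ψ ⁻¹' s) := hs.affine_preimage ψ.toAffineMap
  have hemb : Topology.IsEmbedding ⇑ψ := ψ.isometry.isEmbedding
  have hclosedemb : Topology.IsClosedEmbedding ⇑ψ :=
    ⟨hemb, by rw [hrange]; exact (affineSpan ℝ s).closed_of_finiteDimensional⟩
  have hrepr : intrinsicInterior ℝ s = ⇑ψ '' interior (⇑ψ ⁻¹' s) := by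
    conv_lhs => rw [← Set.image_preimage_eq_of_subset hCr]
    rw [AffineIsometry.image_intrinsicInterior, my_intrinsicInterior_eq_interior hspanC]
  constructor
  · rw [hrepr]
    exact (hconv1.interior).affine_image ψ.toAffineMap
  · rw [hrepr, hclosedemb.closure_image_eq]
    have h1 : closure (interior (⇑ψ ⁻¹' s)) = closure (⇑ψ ⁻¹' s) := by
      obtain ⟨y, hy⟩ := hconv1.interior_nonempty_iff_affineSpan_eq_top.2 hspanC
      refine subset_antisymm (closure_mono interior_subset) ?_
      intro x hx
      have h2 : openSegment ℝ y x ⊆ interior (⇑ψ ⁻¹' s) :=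
        hconv1.openSegment_interior_closure_subset_interior hy hx
      exact closure_mono h2 (segment_subset_closure_openSegment (right_mem_segment ℝ y x))
    rw [h1, ← hclosedemb.closure_image_eq, Set.image_preimage_eq_of_subset hCr]


theorem nearlyConvex_iff_nearlyEqual_convexHull (A : Set X) :
    NearlyConvex A ↔ NearlyEqual A (convexHull ℝ A) := by
  constructor
  · rintro ⟨C, hC, hCA, hAc⟩
    have hCc : C ⊆ convexHull ℝ A := hCA.trans (subset_convexHull ℝ A)
    have hcc : convexHull ℝ A ⊆ closure C := convexHull_min hAc hC.closure
    constructor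
    · have h1 : closure A = closure C :=
        subset_antisymm (by simpa using closure_mono hAc) (closure_mono hCA)
      have h2 : closure (convexHull ℝ A) = closure C :=
        subset_antisymm (by simpa using closure_mono hcc) (closure_mono hCc)
      rw [h1, h2]
    · rw [my_sandwich hC hCA hAc, my_sandwich hC hCc hcc]
  · rintro ⟨hcl, hint⟩
    rcases A.eq_empty_or_nonempty with rfl | hne
    · exact ⟨∅, convex_empty, Subset.rfl, by simp⟩
    · obtain ⟨hconv, hclos⟩ := my_relint (convex_convexHull ℝ A)
        (hne.mono (subset_convexHull ℝ A))
      refine ⟨intrinsicInterior ℝ (convexHull ℝ A), hconv, ?_, ?_⟩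
      · rw [← hint]; exact intrinsicInterior_subset
      · rw [hclos, ← hcl]; exact subset_closure
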